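/- Let d ≥ 1, let H ⊆ ℝ^d and r > 0. Then ∫_{1/2}^{1} ρ^{-(d+1)} · L({x ∈ ρ•H : dist(x, ∂(ρ•H)) < r}) dρ ≤ (log 2) · L({x ∈ H : dist(x, ∂H) < 2r}). -/

import Mathlib

open MeasureTheory Pointwise

/-- Key scaling inequality: for any `H ⊆ ℝ^d` and `r > 0`,
`∫_{1/2}^1 ρ^{-(d+1)} L([∂(ρ•H)]^r) dρ ≤ (log 2)·L([∂H]^{2r})`, where `[∂H]^r` denotes the
inner `r`-neighbourhood of the boundary of `H`. -/
theorem scaled_inner_boundary_integral_le (d : ℕ) (hd : 1 ≤ d)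
    (H : Set (EuclideanSpace ℝ (Fin d))) (r : ℝ) (hr : 0 < r) :
    ∫⁻ ρ in Set.Ioc (1/2 : ℝ) 1, ENNReal.ofReal (1 / ρ ^ (d+1)) *
        volume {x | x ∈ ρ • H ∧ Metric.infDist x (frontier (ρ • H)) < r}
      ≤ ENNReal.ofReal (Real.log 2) *
        volume {x | x ∈ H ∧ Metric.infDist x (frontier H) < 2*r} := by
  set S : Set (EuclideanSpace ℝ (Fin d)) :=
    {x | x ∈ H ∧ Metric.infDist x (frontier H) < 2*r} with hS
  -- pointwise bound
  have key : ∀ ρ ∈ Set.Ioc (1/2 : ℝ) 1,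
      ENNReal.ofReal (1 / ρ ^ (d+1)) *
        volume {x | x ∈ ρ • H ∧ Metric.infDist x (frontier (ρ • H)) < r}
      ≤ ENNReal.ofReal (1 / ρ) * volume S := by
    intro ρ hρ
    have hρ0 : (0 : ℝ) < ρ := lt_trans (by norm_num) hρ.1
    have hne : ρ ≠ 0 := ne_of_gt hρ0
    have hfr : frontier (ρ • H) = ρ • frontier H := by
      rw [frontier, frontier, closure_smul₀' hne, interior_smul₀ hne,
        Set.smul_set_sdiff₀ hne]
    have hsub : {x | x ∈ ρ • H ∧ Metric.infDist x (frontier (ρ • H)) < r} ⊆ ρ • S := by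
      rintro x ⟨hxH, hxd⟩
      obtain ⟨y, hyH, rfl⟩ := hxH
      refine ⟨y, ⟨hyH, ?_⟩, rfl⟩
      rw [hfr, infDist_smul₀ hne, Real.norm_eq_abs, abs_of_pos hρ0] at hxd
      have h1 : Metric.infDist y (frontier H) < r / ρ := by
        rw [lt_div_iff₀ hρ0]; linarith [mul_comm ρ (Metric.infDist y (frontier H))]
      refine h1.trans_le ?_
      rw [div_le_iff₀ hρ0]
      nlinarith [hρ.1]
    have hvol : volume {x | x ∈ ρ • H ∧ Metric.infDist x (frontier (ρ • H)) < r}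
        ≤ ENNReal.ofReal (ρ ^ d) * volume S := by
      calc volume {x | x ∈ ρ • H ∧ Metric.infDist x (frontier (ρ • H)) < r}
          ≤ volume (ρ • S) := measure_mono hsub
        _ = ENNReal.ofReal (ρ ^ d) * volume S := by
            rw [MeasureTheory.Measure.addHaar_smul_of_nonneg volume hρ0.le S,
              finrank_euclideanSpace_fin]
    calc ENNReal.ofReal (1 / ρ ^ (d+1)) *
          volume {x | x ∈ ρ • H ∧ Metric.infDist x (frontier (ρ • H)) < r}
        ≤ ENNReal.ofReal (1 / ρ ^ (d+1)) * (ENNReal.ofReal (ρ ^ d) * volume S) :=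
          mul_le_mul_right hvol _
      _ = ENNReal.ofReal (1 / ρ ^ (d+1) * ρ ^ d) * volume S := by
          rw [← mul_assoc, ← ENNReal.ofReal_mul (by positivity)]
      _ = ENNReal.ofReal (1 / ρ) * volume S := by
          congr 2
          field_simp
          ring
  -- integrate the bound
  have hmono : ∫⁻ ρ in Set.Ioc (1/2 : ℝ) 1, ENNReal.ofReal (1 / ρ ^ (d+1)) *
        volume {x | x ∈ ρ • H ∧ Metric.infDist x (frontier (ρ • H)) < r}
      ≤ ∫⁻ ρ in Set.Ioc (1/2 : ℝ) 1, ENNReal.ofReal (1 / ρ) * volume S := by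
    refine lintegral_mono_ae ?_
    exact (ae_restrict_iff' measurableSet_Ioc).2 (Filter.Eventually.of_forall key)
  refine hmono.trans ?_
  have hmeas : Measurable fun ρ : ℝ => ENNReal.ofReal (1 / ρ) := by
    simpa [one_div] using measurable_inv.ennreal_ofReal
  rw [lintegral_mul_const _ hmeas]
  gcongr
  -- ∫⁻ ρ in Ioc (1/2) 1, ofReal (1/ρ) = ofReal (log 2)
  have hne0 : ∀ x : ℝ, x ∈ Set.uIcc (1/2 : ℝ) 1 → (id x : ℝ) ≠ 0 := by
    intro x hx
    have h1 : (1/2 : ℝ) ≤ x := by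
      have := hx.1
      rwa [min_eq_left (by norm_num : (1/2:ℝ) ≤ 1)] at this
    simp only [id]
    linarith
  have hint : IntegrableOn (fun ρ : ℝ => 1 / ρ) (Set.Ioc (1/2 : ℝ) 1) volume := by
    have h := intervalIntegral.intervalIntegrable_one_div (μ := volume)
      (a := (1/2 : ℝ)) (b := 1) (f := id) hne0 continuousOn_id
    rwa [intervalIntegrable_iff_integrableOn_Ioc_of_le (by norm_num)] at h
  have heq : ∫⁻ ρ in Set.Ioc (1/2 : ℝ) 1, ENNReal.ofReal (1 / ρ)
      = ENNReal.ofReal (Real.log 2) := by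
    have hpos : 0 ≤ᶠ[ae (volume.restrict (Set.Ioc (1/2 : ℝ) 1))] fun ρ : ℝ => 1 / ρ := by
      refine (ae_restrict_iff' measurableSet_Ioc).2 (Filter.Eventually.of_forall ?_)
      intro x hx
      have : (0:ℝ) < x := lt_trans (by norm_num) hx.1
      positivity
    rw [← MeasureTheory.ofReal_integral_eq_lintegral_ofReal hint hpos]
    congr 1
    rw [← intervalIntegral.integral_of_le (by norm_num : (1/2 : ℝ) ≤ 1)]
    rw [integral_one_div (fun h => hne0 0 h rfl)]
    norm_num
  exact heq.le
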